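/- Let x̂ ∈ ℝ^n_+ satisfy x̂_i = 0 for every i ∈ I_n with α_i x̂ > 1, and define ŷ ∈ ℝ^n_+ by ŷ_j = max{0, x̂_j + (1/a_{jj})(1 − α_j x̂)} for each j ∈ I_n. If a solution of the system with x(0) ∈ int ℝ^n_+ satisfies liminf_{t→∞} x_i(t) ≥ x̂_i for all i ∈ I_n, then it also satisfies limsup_{t→∞} x_j(t) ≤ ŷ_j for all j ∈ I_n. -/

import Mathlib

open Filter Topology Set

noncomputable section

/-- `alphaLV a i x = Σ_j a i j * x j`. -/
def alphaLV {n : ℕ} (a : Fin n → Fin n → ℝ) (i : Fin n) (x : Fin n → ℝ) : ℝ :=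
  ∑ j, a i j * x j

/-- A solution of the Lotka–Volterra system `x_i' = b_i x_i (1 - α_i x)` on `[0,∞)`
with values in the nonnegative orthant. -/
def IsLVSolution {n : ℕ} (b : Fin n → ℝ) (a : Fin n → Fin n → ℝ)
    (x : ℝ → Fin n → ℝ) : Prop :=
  (∀ t ∈ Set.Ici (0:ℝ), ∀ i, 0 ≤ x t i) ∧
  (∀ t ∈ Set.Ici (0:ℝ), ∀ i,
    HasDerivWithinAt (fun s => x s i)
      (b i * x t i * (1 - alphaLV a i (x t))) (Set.Ici 0) t)

/-- An equilibrium of the Lotka–Volterra system in `ℝ^n_+`. -/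
def IsLVEquilibrium {n : ℕ} (b : Fin n → ℝ) (a : Fin n → Fin n → ℝ)
    (y : Fin n → ℝ) : Prop :=
  (∀ i, 0 ≤ y i) ∧ ∀ i, b i * y i * (1 - alphaLV a i y) = 0

/-- `y` is a global attractor: it is an equilibrium and every solution starting in
the open positive orthant converges to it. -/
def IsGlobalAttractor {n : ℕ} (b : Fin n → ℝ) (a : Fin n → Fin n → ℝ)
    (y : Fin n → ℝ) : Prop :=
  IsLVEquilibrium b a y ∧
  ∀ x : ℝ → Fin n → ℝ, IsLVSolution b a x → (∀ i, 0 < x 0 i) →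
    ∀ i, Tendsto (fun t => x t i) atTop (nhds (y i))

open Classical in
/-- The projection `u^J`: `u` on `J`, zero off `J`. -/
def projLV {n : ℕ} (u : Fin n → ℝ) (J : Set (Fin n)) : Fin n → ℝ :=
  fun i => if i ∈ J then u i else 0

open Classical in
/-- The vector `U` of (3.1), with the index set `I_n` replaced by `S`. -/
def Uvec {n : ℕ} (a : Fin n → Fin n → ℝ) (S : Set (Fin n)) (i : Fin n) : ℝ :=
  if ∃ j ∈ S, j ≠ i ∧ (a i i ≤ a j i ∨ a i j = 0) then (a i i)⁻¹
  else if (∀ j ∈ S, j ≠ i → a j i < a i i) ∧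
      (∀ j ∈ S, ∀ k ∈ S, j ≠ i → k ≠ i → a j k ≤ a i k) then 0
  else sSup {r | ∃ j ∈ S, ∃ k ∈ S, j ≠ i ∧ k ≠ i ∧ a i j < a k j ∧
      r = (a k j - a i j) / (a i i * a k j - a i j * a k i)}

/-- Condition `(C_k)` relative to a vector `U`: either `U^{I_n∖{k}}` is below `γ_k`,
or every point of `γ_k ∩ [0, U^{I_n∖{k}}]` is above `γ_j` for every `j ≠ k`. -/
def CondC {n : ℕ} (a : Fin n → Fin n → ℝ) (U : Fin n → ℝ) (k : Fin n) : Prop :=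
  alphaLV a k (projLV U (({k} : Set (Fin n))ᶜ)) < 1 ∨
  ∀ j, j ≠ k → ∀ x : Fin n → ℝ,
    (∀ i, 0 ≤ x i ∧ x i ≤ projLV U (({k} : Set (Fin n))ᶜ) i) →
    alphaLV a k x = 1 → 1 < alphaLV a j x

/-- Condition (3.7) for the pair `(i,j)` relative to a vector `U`. -/
def Cond37 {n : ℕ} (a : Fin n → Fin n → ℝ) (U : Fin n → ℝ) (i j : Fin n) : Prop :=
  max 0 (a i j / a j j * (1 - alphaLV a j (projLV U (({i, j} : Set (Fin n))ᶜ))))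
    < 1 - alphaLV a i (projLV U (({i, j} : Set (Fin n))ᶜ))

/-- The vector `Y = (1/a₁₁, …, 1/aₙₙ)`. -/
def Yvec {n : ℕ} (a : Fin n → Fin n → ℝ) : Fin n → ℝ := fun i => (a i i)⁻¹


/-- Core ODE comparison: if `u ≥ 0` on `[0,∞)`, `u' = f` within `[0,∞)`, and
`f t ≤ B u (c - A u)` for `t ≥ T`, with `A, B, M > 0` and `c < A M`, then
eventually `u ≤ M`. -/
lemma ode_decay_bound (u f : ℝ → ℝ) (T A B c M : ℝ) (hT : 0 < T)
    (hA : 0 < A) (hB : 0 < B) (hM : 0 < M) (hcM : c < A * M)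
    (hu0 : ∀ t, 0 ≤ t → 0 ≤ u t)
    (hderiv : ∀ t, 0 ≤ t → HasDerivWithinAt u (f t) (Set.Ici 0) t)
    (hf : ∀ t, T ≤ t → f t ≤ B * u t * (c - A * u t)) :
    ∀ᶠ t in atTop, u t ≤ M := by
  set K := B * M * (A * M - c) with hK
  have hKpos : 0 < K := mul_pos (mul_pos hB hM) (sub_pos.2 hcM)
  have hcont : ContinuousOn u (Set.Ici 0) := fun t ht =>
    (hderiv t ht).continuousWithinAt
  have hderiv' : ∀ t, 0 < t → HasDerivAt u (f t) t := fun t ht =>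
    (hderiv t ht.le).hasDerivAt (Ici_mem_nhds ht)
  -- key decrease estimate
  have key : ∀ p q, T ≤ p → p ≤ q → (∀ t, t ∈ Set.Ioo p q → M ≤ u t) →
      u q + K * q ≤ u p + K * p := by
    intro p q hp hpq hmid
    have hp0 : 0 < p := lt_of_lt_of_le hT hp
    have hsub : Set.Icc p q ⊆ Set.Ici (0:ℝ) := fun t ht => le_trans hp0.le ht.1
    have hφd : ∀ t ∈ interior (Set.Icc p q),
        HasDerivAt (fun t => u t + K * t) (f t + K) t := by
      intro t ht
      rw [interior_Icc] at ht
      have h1 := (hderiv' t (lt_of_lt_of_le hp0 ht.1.le)).add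
        ((hasDerivAt_id t).const_mul K)
      have h2 : HasDerivAt (fun t => u t + K * t) (f t + K * 1) t := h1
      rwa [mul_one] at h2
    have hcφ : ContinuousOn (fun t => u t + K * t) (Set.Icc p q) :=
      (hcont.mono hsub).add (continuous_const.mul continuous_id).continuousOn
    have hanti : AntitoneOn (fun t => u t + K * t) (Set.Icc p q) := by
      apply antitoneOn_of_deriv_nonpos (convex_Icc p q) hcφ
      · intro t ht
        exact (hφd t ht).differentiableAt.differentiableWithinAt
      · intro t ht
        rw [(hφd t ht).deriv]
        rw [interior_Icc] at ht
        have hut : M ≤ u t := hmid t ht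
        have hft := hf t (le_trans hp ht.1.le)
        have h1 : 0 ≤ B * (u t - M) * (A * (u t + M) - c) := by
          apply mul_nonneg (mul_nonneg hB.le (sub_nonneg.2 hut))
          nlinarith
        nlinarith
    exact hanti ⟨le_refl p, hpq⟩ ⟨hpq, le_refl q⟩ hpq
  -- there is a point below M
  have ex0 : ∃ t0, T ≤ t0 ∧ u t0 ≤ M := by
    by_contra hcon
    push_neg at hcon
    obtain ⟨r, hr0, hrK⟩ : ∃ r, 0 ≤ r ∧ K * r = u T :=
      ⟨u T / K, div_nonneg (hu0 T hT.le) hKpos.le, by field_simp⟩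
    set q := T + r + 1 with hq
    have hTq : T ≤ q := by linarith
    have h2 := key T q le_rfl hTq (fun t ht => (hcon t ht.1.le).le)
    have hKq : K * q = K * T + K * r + K := by rw [hq]; ring
    have hq0 : (0:ℝ) ≤ q := by linarith [hT.le]
    have := hu0 q hq0
    linarith
  obtain ⟨t0, ht0T, ht0M⟩ := ex0
  rw [eventually_atTop]
  refine ⟨t0, fun t1 ht1 => ?_⟩
  by_contra hgt
  push_neg at hgt
  set S := Set.Icc t0 t1 ∩ u ⁻¹' Set.Iic M with hSdef
  have hne : S.Nonempty := ⟨t0, ⟨le_refl t0, ht1⟩, ht0M⟩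
  have hbdd : BddAbove S := ⟨t1, fun t ht => ht.1.2⟩
  have hclosed : IsClosed S :=
    (hcont.mono (fun t ht => le_trans (le_trans hT.le ht0T) ht.1)).preimage_isClosed_of_isClosed
      isClosed_Icc isClosed_Iic
  have hs : sSup S ∈ S := hclosed.csSup_mem hne hbdd
  set s := sSup S with hsdef
  have hsM : u s ≤ M := hs.2
  have hst1 : s < t1 := by
    rcases lt_or_eq_of_le hs.1.2 with h | h
    · exact h
    · exact absurd (h ▸ hsM) (not_le.2 hgt)
  have hmid : ∀ t, t ∈ Set.Ioo s t1 → M ≤ u t := by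
    intro t ht
    by_contra hub
    push_neg at hub
    have htS : t ∈ S := ⟨⟨le_trans hs.1.1 ht.1.le, ht.2.le⟩, hub.le⟩
    exact absurd (le_csSup hbdd htS) (not_le.2 ht.1)
  have h3 := key s t1 (le_trans ht0T hs.1.1) hst1.le hmid
  have h4 : K * s < K * t1 := mul_lt_mul_of_pos_left hst1 hKpos
  linarith

/-- From `c ≤ liminf u` (and eventual nonnegativity) conclude an eventual lower
bound `c - ε < u t`. -/
lemma eventually_gt_of_le_liminf' {u : ℝ → ℝ} {c ε : ℝ} (hε : 0 < ε)
    (h0 : ∀ᶠ t in atTop, 0 ≤ u t)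
    (hlb : c ≤ liminf u atTop) :
    ∀ᶠ t in atTop, c - ε < u t := by
  by_cases hb : ∃ d, (∀ᶠ t in atTop, d ≤ u t) ∧ c - ε < d
  · obtain ⟨d, hd, hcd⟩ := hb
    exact hd.mono fun t ht => lt_of_lt_of_le hcd ht
  · push_neg at hb
    exfalso
    have hle : liminf u atTop ≤ c - ε := by
      rw [liminf_eq]
      exact csSup_le ⟨0, h0⟩ fun d hd => hb d hd
    linarith

/-- Lemma 5.2: given an ultimate lower bound `x̂` (with `x̂_i = 0 whenever α_i x̂ > 1`)
for a solution in the open orthant, the vector `ŷ` of (5.1) is an ultimate upper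
bound. -/
theorem lemma5_2 (n : ℕ) (hn : 2 ≤ n) (b : Fin n → ℝ) (a : Fin n → Fin n → ℝ)
    (hb : ∀ i, 0 < b i) (hdiag : ∀ i, 0 < a i i) (hnn : ∀ i j, 0 ≤ a i j)
    (xh : Fin n → ℝ) (hxh0 : ∀ i, 0 ≤ xh i)
    (hxh : ∀ i, 1 < alphaLV a i xh → xh i = 0)
    (yh : Fin n → ℝ)
    (hyh : ∀ j, yh j = max 0 (xh j + (a j j)⁻¹ * (1 - alphaLV a j xh)))
    (x : ℝ → Fin n → ℝ) (hsol : IsLVSolution b a x) (hx0 : ∀ i, 0 < x 0 i)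
    (hlb : ∀ i, xh i ≤ liminf (fun t => x t i) atTop) :
    ∀ j, limsup (fun t => x t j) atTop ≤ yh j := by
  intro j
  have hcob : IsCoboundedUnder (· ≤ ·) atTop (fun t => x t j) :=
    isCoboundedUnder_le_of_eventually_le atTop
      ((eventually_ge_atTop (0:ℝ)).mono fun t ht => hsol.1 t ht j)
  apply le_of_forall_gt_imp_ge_of_dense
  intro M hM
  have hyh0 : 0 ≤ yh j := by rw [hyh j]; exact le_max_left _ _
  have hM0 : 0 < M := lt_of_le_of_lt hyh0 hM
  have hA : 0 < a j j := hdiag j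
  set c0 : ℝ := 1 - alphaLV a j xh + a j j * xh j with hc0
  have hLe : xh j + (a j j)⁻¹ * (1 - alphaLV a j xh) = c0 / a j j := by
    rw [hc0]; field_simp; ring
  have hMc0 : c0 < a j j * M := by
    have h1 : c0 / a j j < M := by
      have h2 := hyh j
      rw [hLe] at h2
      exact lt_of_le_of_lt (le_max_right 0 (c0 / a j j)) (h2 ▸ hM)
    have h3 := (div_lt_iff₀ hA).mp h1
    linarith
  set Ks : ℝ := ∑ i, a j i with hKs
  have hKs0 : 0 ≤ Ks := Finset.sum_nonneg fun i _ => hnn j i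
  set ε : ℝ := (a j j * M - c0) / (2 * (Ks + 1)) with hε
  have hεpos : 0 < ε := div_pos (by linarith) (by linarith)
  have hc' : c0 + ε * Ks < a j j * M := by
    have h2 : ε * (2 * (Ks + 1)) = a j j * M - c0 := by
      rw [hε]; field_simp
    nlinarith
  have hall : ∀ᶠ t in atTop, ∀ i, xh i - ε < x t i := by
    rw [eventually_all]
    intro i
    exact eventually_gt_of_le_liminf' hεpos
      ((eventually_ge_atTop (0:ℝ)).mono fun t ht => hsol.1 t ht i) (hlb i)
  obtain ⟨T0, hT0⟩ := eventually_atTop.mp hall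
  have hTpos : (0:ℝ) < max T0 1 := lt_of_lt_of_le one_pos (le_max_right _ _)
  have hfb : ∀ t, max T0 1 ≤ t → b j * x t j * (1 - alphaLV a j (x t))
      ≤ b j * x t j * ((c0 + ε * Ks) - a j j * x t j) := by
    intro t htT
    have ht0 : (0:ℝ) ≤ t := le_trans hTpos.le htT
    have hxt := hT0 t (le_trans (le_max_left _ _) htT)
    have hxtj : 0 ≤ x t j := hsol.1 t ht0 j
    have e1 : alphaLV a j (x t)
        = a j j * x t j + ∑ i ∈ Finset.univ.erase j, a j i * x t i := by
      rw [alphaLV, ← Finset.add_sum_erase _ _ (Finset.mem_univ j)]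
    have e2 : alphaLV a j xh
        = a j j * xh j + ∑ i ∈ Finset.univ.erase j, a j i * xh i := by
      rw [alphaLV, ← Finset.add_sum_erase _ _ (Finset.mem_univ j)]
    have hsum1 : ∑ i ∈ Finset.univ.erase j, (a j i * xh i - a j i * ε)
        ≤ ∑ i ∈ Finset.univ.erase j, a j i * x t i := by
      apply Finset.sum_le_sum
      intro i _
      have h4 := mul_le_mul_of_nonneg_left (le_of_lt (hxt i)) (hnn j i)
      nlinarith [h4]
    rw [Finset.sum_sub_distrib] at hsum1
    have hsum2 : ∑ i ∈ Finset.univ.erase j, a j i * ε ≤ Ks * ε := by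
      rw [← Finset.sum_mul, hKs]
      apply mul_le_mul_of_nonneg_right _ hεpos.le
      exact Finset.sum_le_sum_of_subset_of_nonneg (Finset.subset_univ _)
        (fun i _ _ => hnn j i)
    apply mul_le_mul_of_nonneg_left _ (mul_nonneg (hb j).le hxtj)
    linarith [e1, e2, hsum1, hsum2]
  have hev := ode_decay_bound (fun t => x t j)
      (fun t => b j * x t j * (1 - alphaLV a j (x t)))
      (max T0 1) (a j j) (b j) (c0 + ε * Ks) M hTpos hA (hb j) hM0 hc'
      (fun t ht => hsol.1 t ht j) (fun t ht => hsol.2 t ht j) hfb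
  exact limsup_le_of_le hcob hev
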